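/- (Chamber claim in Remark 3.3) Let n ≥ 2, c ≥ 1, and let θ = (θ₀, θ₁) ∈ ℝ² satisfy θ₀ > 0 and −θ₀ < θ₁ < −((c−1)/c)·θ₀ (i.e., θ lies in the open cone Γ_c). Then a (c,c)-dimensional framed representation of Λ_n is θ-semistable if and only if it is θ_c-semistable, where θ_c = (2c, 1−2c); that is, the set of semistable representations does not change as the stability parameter varies inside Γ_c. -/
import Mathlib


open Module

lemma aux1 (c : ℕ) (hc : 1 ≤ c) (θ₀ θ₁ : ℝ) (hθ₀ : 0 < θ₀) (hθ₁ : -θ₀ < θ₁)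
    (key : θ₁ * c < -((c:ℝ) - 1) * θ₀) (a b : ℕ) (ha : a ≤ c) (hb : b ≤ c) :
    θ₀ * a + θ₁ * b ≤ 0 ↔ (a < b ∨ (a = 0 ∧ b = 0)) := by
  have hcR : (1:ℝ) ≤ c := by exact_mod_cast hc
  have haR : (a:ℝ) ≤ c := by exact_mod_cast ha
  have hbR : (b:ℝ) ≤ c := by exact_mod_cast hb
  constructor
  · intro h
    rcases Nat.eq_zero_or_pos b with hb0 | hb0
    · subst hb0
      right
      refine ⟨?_, rfl⟩
      by_contra ha0
      have h1 : (1:ℝ) ≤ a := by exact_mod_cast Nat.one_le_iff_ne_zero.mpr ha0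
      push_cast at h
      nlinarith
    · left
      by_contra hab
      push_neg at hab
      have hba : (b:ℝ) ≤ a := by exact_mod_cast hab
      have hb1 : (1:ℝ) ≤ b := by exact_mod_cast hb0
      nlinarith [mul_le_mul_of_nonneg_left hba hθ₀.le,
        mul_nonneg (by linarith : (0:ℝ) ≤ θ₀ + θ₁) (by linarith : (0:ℝ) ≤ (b:ℝ) - 1)]
  · rintro (hab | ⟨rfl, rfl⟩)
    · have h1 : (a:ℝ) + 1 ≤ b := by exact_mod_cast hab
      nlinarith [mul_le_mul_of_nonneg_left (by linarith : (a:ℝ) ≤ (b:ℝ) - 1) hθ₀.le,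
        mul_nonneg (by linarith : (0:ℝ) ≤ θ₀ + θ₁) (by linarith : (0:ℝ) ≤ (c:ℝ) - b)]
    · simp

lemma aux2 (c : ℕ) (hc : 1 ≤ c) (θ₀ θ₁ : ℝ) (hθ₀ : 0 < θ₀) (hθ₁ : -θ₀ < θ₁)
    (key : θ₁ * c < -((c:ℝ) - 1) * θ₀) (a b : ℕ) (ha : a ≤ c) (hb : b ≤ c) :
    θ₀ * a + θ₁ * b ≤ (θ₀ + θ₁) * c ↔ a ≤ b := by
  have hcR : (1:ℝ) ≤ c := by exact_mod_cast hc
  have haR : (a:ℝ) ≤ c := by exact_mod_cast ha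
  have hbR : (b:ℝ) ≤ c := by exact_mod_cast hb
  constructor
  · intro h
    by_contra hab
    push_neg at hab
    have h1 : (b:ℝ) + 1 ≤ a := by exact_mod_cast hab
    nlinarith [mul_le_mul_of_nonneg_left (by linarith : (c:ℝ) - a ≤ ((c:ℝ) - b) - 1) hθ₀.le,
      mul_nonneg (by linarith : (0:ℝ) ≤ θ₀ + θ₁) (by linarith : (0:ℝ) ≤ (b:ℝ)),
      mul_nonneg (by linarith : (0:ℝ) ≤ θ₀ + θ₁) (by linarith : (0:ℝ) ≤ (c:ℝ) - b)]
  · intro hab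
    have h1 : (a:ℝ) ≤ b := by exact_mod_cast hab
    nlinarith [mul_le_mul_of_nonneg_left h1 hθ₀.le,
      mul_nonneg (by linarith : (0:ℝ) ≤ θ₀ + θ₁) (by linarith : (0:ℝ) ≤ (c:ℝ) - b)]


/-- (Chamber claim in Remark 3.3) For θ = (θ₀,θ₁) in the open cone Γ_c, a
(c,c)-dimensional framed representation of Λ_n is θ-semistable iff it is
θ_c-semistable, where θ_c = (2c, 1−2c). -/
theorem stmt_13 (n c : ℕ) (hn : 2 ≤ n) (hc : 1 ≤ c)
    (θ₀ θ₁ : ℝ) (hθ₀ : 0 < θ₀) (hθ₁ : -θ₀ < θ₁) (hθ₁' : θ₁ < -(((c : ℝ) - 1) / c) * θ₀)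
    (V₀ V₁ W : Type) [AddCommGroup V₀] [Module ℂ V₀] [FiniteDimensional ℂ V₀]
    [AddCommGroup V₁] [Module ℂ V₁] [FiniteDimensional ℂ V₁]
    [AddCommGroup W] [Module ℂ W] [FiniteDimensional ℂ W]
    (hV₀ : finrank ℂ V₀ = c) (hV₁ : finrank ℂ V₁ = c) (hW : finrank ℂ W = 1)
    (A₁ A₂ : V₀ →ₗ[ℂ] V₁)
    (C : Fin n → (V₁ →ₗ[ℂ] V₀))
    (e : V₀ →ₗ[ℂ] W) (f : Fin (n - 1) → (W →ₗ[ℂ] V₀))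
    -- the relations (Q1)
    (hQ1a : ∀ q : Fin (n - 1),
      A₂ ∘ₗ C ⟨q.1 + 1, by have := q.2; omega⟩ = A₁ ∘ₗ C ⟨q.1, by have := q.2; omega⟩)
    (hQ1b : ∀ q : Fin (n - 1),
      C ⟨q.1 + 1, by have := q.2; omega⟩ ∘ₗ A₂ =
        C ⟨q.1, by have := q.2; omega⟩ ∘ₗ A₁ + f q ∘ₗ e) :
    -- θ-semistability
    (∀ (S₀ : Submodule ℂ V₀) (S₁ : Submodule ℂ V₁),
      S₀.map A₁ ≤ S₁ → S₀.map A₂ ≤ S₁ →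
      (∀ q : Fin n, S₁.map (C q) ≤ S₀) →
      ((S₀ ≤ LinearMap.ker e →
          θ₀ * (finrank ℂ S₀ : ℝ) + θ₁ * (finrank ℂ S₁ : ℝ) ≤ 0) ∧
       ((∀ q, LinearMap.range (f q) ≤ S₀) →
          θ₀ * (finrank ℂ S₀ : ℝ) + θ₁ * (finrank ℂ S₁ : ℝ) ≤ (θ₀ + θ₁) * c)))
    ↔
    -- θ_c-semistability, θ_c = (2c, 1−2c)
    (∀ (S₀ : Submodule ℂ V₀) (S₁ : Submodule ℂ V₁),
      S₀.map A₁ ≤ S₁ → S₀.map A₂ ≤ S₁ →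
      (∀ q : Fin n, S₁.map (C q) ≤ S₀) →
      (((S₀ ≤ LinearMap.ker e →
          (2 * c : ℝ) * (finrank ℂ S₀ : ℝ) + (1 - 2 * c) * (finrank ℂ S₁ : ℝ) ≤ 0) ∧
       ((∀ q, LinearMap.range (f q) ≤ S₀) →
          (2 * c : ℝ) * (finrank ℂ S₀ : ℝ) + (1 - 2 * c) * (finrank ℂ S₁ : ℝ) ≤
            ((2 * c : ℝ) + (1 - 2 * c)) * c)))) := by
  have hcR : (1:ℝ) ≤ c := by exact_mod_cast hc
  have hcpos : (0:ℝ) < c := by linarith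
  have key : θ₁ * c < -((c:ℝ) - 1) * θ₀ := by
    have h := (mul_lt_mul_of_pos_right hθ₁' hcpos)
    have : -(((c : ℝ) - 1) / c) * θ₀ * c = -((c:ℝ) - 1) * θ₀ := by
      field_simp
    linarith [this ▸ h]
  have hθ₀' : (0:ℝ) < 2 * c := by linarith
  have hθ₁c : -(2 * (c:ℝ)) < 1 - 2 * c := by linarith
  have key' : ((1:ℝ) - 2 * c) * c < -((c:ℝ) - 1) * (2 * c) := by nlinarith
  constructor <;> intro H S₀ S₁ h1 h2 h3 <;>
    obtain ⟨Ha, Hb⟩ := H S₀ S₁ h1 h2 h3 <;>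
    have ha : finrank ℂ S₀ ≤ c := hV₀ ▸ Submodule.finrank_le S₀ <;>
    have hb : finrank ℂ S₁ ≤ c := hV₁ ▸ Submodule.finrank_le S₁
  · exact ⟨fun hk => (aux1 c hc (2*c) (1-2*c) hθ₀' hθ₁c key' _ _ ha hb).mpr
        ((aux1 c hc θ₀ θ₁ hθ₀ hθ₁ key _ _ ha hb).mp (Ha hk)),
      fun hf => (aux2 c hc (2*c) (1-2*c) hθ₀' hθ₁c key' _ _ ha hb).mpr
        ((aux2 c hc θ₀ θ₁ hθ₀ hθ₁ key _ _ ha hb).mp (Hb hf))⟩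
  · exact ⟨fun hk => (aux1 c hc θ₀ θ₁ hθ₀ hθ₁ key _ _ ha hb).mpr
        ((aux1 c hc (2*c) (1-2*c) hθ₀' hθ₁c key' _ _ ha hb).mp (Ha hk)),
      fun hf => (aux2 c hc θ₀ θ₁ hθ₀ hθ₁ key _ _ ha hb).mpr
        ((aux2 c hc (2*c) (1-2*c) hθ₀' hθ₁c key' _ _ ha hb).mp (Hb hf))⟩
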